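/- Let I = [−1/2,1/2], Q = I × I, and let F : Q → Q be a Borel map of the form F(x,y) = (T(x), G(x,y)). Let μ be an F-invariant Borel probability measure on Q whose marginal μ_T on the first coordinate is T-invariant and absolutely continuous with respect to Lebesgue measure m on I. Fix α ∈ (0,1]. Assume: (1) there exist C₀ > 0 and Λ₀ ∈ (0,1) such that for every f ∈ BV_{1,α}, every bounded measurable g : I → ℝ and every n ≥ 1, | ∫ f·(g∘Tⁿ) dm − (∫ g dμ_T)(∫ f dm) | ≤ C₀ Λ₀ⁿ ‖g‖_∞ ‖f‖_{1,α}; (2) T is nonsingular with respect to m, and there is a finite collection of intervals I₁,…,I_m with ∪I_i = I such that T restricted to each I_i is a homeomorphism onto its image; (3) there is λ < 1 such that |G(x,y₁) − G(x,y₂)| ≤ λ|y₁ − y₂| for all x, y₁, y₂ ∈ I; (4) there exist C₁ > 0 and K > 0 such that for every f : Q → ℝ and every n ≥ 1, ‖π(f∘Fⁿ)‖_{1,α} + Var^□(f∘Fⁿ) ≤ C₁ Kⁿ ( ‖π(f)‖_{1,α} + ‖f‖_{y-Lip} + Var^□(f) ). Then F has exponential decay of correlations: there exist C₂ > 0 and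 Λ ∈ (0,1) such that for all f, g : Q → ℝ and all n ≥ 0, | ∫ f·(g∘Fⁿ) dμ − (∫ g dμ)(∫ f dμ) | ≤ C₂ Λⁿ ‖g‖_{y-Lip} ( ‖f‖_{y-Lip} + ‖π(f)‖_{1,α} + Var^□(f) ). -/

import Mathlib

open MeasureTheory Set Filter Metric
open scoped ENNReal

noncomputable section

/-- The interval `I = [−1/2, 1/2]`. -/
def J : Set ℝ := Set.Icc (-(1/2) : ℝ) (1/2)

/-- The square `Q = I × I`. -/
def Sq : Set (ℝ × ℝ) := J ×ˢ J

/-- The essential oscillation of `h` over the `ε`-ball around `x`, intersected with `I`. -/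
def osc (h : ℝ → ℝ) (ε x : ℝ) : ℝ≥0∞ :=
  essSup (fun q : ℝ × ℝ => ENNReal.ofReal |h q.1 - h q.2|)
    ((volume.restrict (Metric.ball x ε ∩ J)).prod (volume.restrict (Metric.ball x ε ∩ J)))

/-- `osc_1(h,ε) = ∫_I osc(h,ε,x) dm(x)`. -/
def osc1 (h : ℝ → ℝ) (ε : ℝ) : ℝ≥0∞ := ∫⁻ x in J, osc h ε x

/-- `Var_{1,r}(h) = sup_{0 < ε ≤ 1} ε^{−r} osc_1(h,ε)` (cutoff `A = 1`). -/
def Var1 (r : ℝ) (h : ℝ → ℝ) : ℝ≥0∞ :=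
  ⨆ ε ∈ Set.Ioc (0 : ℝ) 1, ENNReal.ofReal (ε ^ (-r)) * osc1 h ε

/-- `‖h‖_{1,r} = Var_{1,r}(h) + ‖h‖_{L¹(m)}` (valued in `[0,∞]`). -/
def norm1E (r : ℝ) (h : ℝ → ℝ) : ℝ≥0∞ := Var1 r h + ∫⁻ x in J, ENNReal.ofReal |h x|

/-- `π(f)(x) = ∫_I f(x,t) dt`. -/
def piF (f : ℝ × ℝ → ℝ) : ℝ → ℝ := fun x => ∫ t in J, f (x, t)

/-- `‖g‖_sup = sup_{Q} |g|` (valued in `[0,∞]`). -/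
def supQ (g : ℝ × ℝ → ℝ) : ℝ≥0∞ := ⨆ p ∈ Sq, ENNReal.ofReal |g p|

/-- `Lip_y(g) = sup_{x, y₁ ≠ y₂} |g(x,y₂) − g(x,y₁)| / |y₂ − y₁|` (valued in `[0,∞]`). -/
def lipY (g : ℝ × ℝ → ℝ) : ℝ≥0∞ :=
  ⨆ x ∈ J, ⨆ y₁ ∈ J, ⨆ y₂ ∈ J,
    ENNReal.ofReal |g (x, y₁) - g (x, y₂)| / ENNReal.ofReal |y₁ - y₂|

/-- `‖g‖_{y-Lip} = ‖g‖_sup + Lip_y(g)`. -/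
def yLipNorm (g : ℝ × ℝ → ℝ) : ℝ≥0∞ := supQ g + lipY g

/-- The variation on the square:
`Var^□(f) = sup Σ |f(x_i,y_i) − f(x_{i+1},y_i)|` over all `n`, all monotone
`x₁ ≤ … ≤ x_n` in `I` and all `y₁, …, y_n ∈ I`. -/
def VarSq (f : ℝ × ℝ → ℝ) : ℝ≥0∞ :=
  ⨆ (n : ℕ) (u : Fin (n + 1) → ℝ) (_ : Monotone u) (_ : ∀ i, u i ∈ J)
    (y : Fin (n + 1) → ℝ) (_ : ∀ i, y i ∈ J),
    ENNReal.ofReal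
      (∑ i : Fin n, |f (u i.castSucc, y i.castSucc) - f (u i.succ, y i.castSucc)|)

section Aux

lemma J_meas : MeasurableSet J := measurableSet_Icc
lemma Sq_meas : MeasurableSet Sq := J_meas.prod J_meas
lemma volume_J : volume J = 1 := by
  rw [J, Real.volume_Icc]; norm_num
lemma zero_mem_J : (0:ℝ) ∈ J := by constructor <;> norm_num
lemma mem_Sq {x y : ℝ} : (x, y) ∈ Sq ↔ x ∈ J ∧ y ∈ J := Set.mem_prod
lemma abs_le_half_of_mem_J {y : ℝ} (h : y ∈ J) : |y| ≤ 1/2 := by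
  rw [abs_le]; exact ⟨h.1, h.2⟩

instance : IsProbabilityMeasure (volume.restrict J) :=
  ⟨by rw [Measure.restrict_apply_univ]; exact volume_J⟩

lemma Var1_one (r : ℝ) : Var1 r (fun _ => (1:ℝ)) = 0 := by
  have h : ∀ ε : ℝ, osc1 (fun _ => (1:ℝ)) ε = 0 := by
    intro ε
    have h2 : ∀ x : ℝ, osc (fun _ => (1:ℝ)) ε x = 0 := by
      intro x
      have : (fun q : ℝ × ℝ => ENNReal.ofReal |(1:ℝ) - 1|) = fun _ => (0:ℝ≥0∞) := by
        simp
      rw [osc, this]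
      simpa using essSup_const_bot (β := ℝ≥0∞)
    simp [osc1, h2]
  simp [Var1, h]

lemma norm1E_one (r : ℝ) : norm1E r (fun _ => (1:ℝ)) = 1 := by
  rw [norm1E, Var1_one, zero_add]
  simp [volume_J]

lemma setIntegral_J_one : (∫ x in J, (1:ℝ)) = 1 := by
  simp

lemma supQ_spec {g : ℝ × ℝ → ℝ} (h : supQ g ≠ ⊤) {p : ℝ × ℝ} (hp : p ∈ Sq) :
    |g p| ≤ (supQ g).toReal := by
  have h1 : ENNReal.ofReal |g p| ≤ supQ g := le_iSup₂ (f := fun p _ => ENNReal.ofReal |g p|) p hp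
  exact (ENNReal.ofReal_le_iff_le_toReal h).mp h1

lemma supQ_eq_zero {g : ℝ × ℝ → ℝ} (h : supQ g = 0) {p : ℝ × ℝ} (hp : p ∈ Sq) : g p = 0 := by
  have h1 : ENNReal.ofReal |g p| ≤ supQ g := le_iSup₂ (f := fun p _ => ENNReal.ofReal |g p|) p hp
  rw [h, le_zero_iff, ENNReal.ofReal_eq_zero] at h1
  have := abs_nonneg (g p)
  have : |g p| = 0 := le_antisymm h1 this
  exact abs_eq_zero.mp this

lemma lipY_spec {g : ℝ × ℝ → ℝ} (h : lipY g ≠ ⊤) {x y₁ y₂ : ℝ}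
    (hx : x ∈ J) (h1 : y₁ ∈ J) (h2 : y₂ ∈ J) :
    |g (x, y₁) - g (x, y₂)| ≤ (lipY g).toReal * |y₁ - y₂| := by
  by_cases hy : y₁ = y₂
  · subst hy; simp [mul_nonneg ENNReal.toReal_nonneg (abs_nonneg _)]
  · have hne : ENNReal.ofReal |y₁ - y₂| ≠ 0 := by
      simp only [ne_eq, ENNReal.ofReal_eq_zero, not_le]
      exact abs_pos.mpr (sub_ne_zero.mpr hy)
    have hq : ENNReal.ofReal |g (x, y₁) - g (x, y₂)| / ENNReal.ofReal |y₁ - y₂| ≤ lipY g := by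
      refine le_trans ?_ (le_iSup₂ (f := fun x (_ : x ∈ J) =>
        ⨆ y₁ ∈ J, ⨆ y₂ ∈ J, ENNReal.ofReal |g (x, y₁) - g (x, y₂)| / ENNReal.ofReal |y₁ - y₂|) x hx)
      refine le_trans ?_ (le_iSup₂ (f := fun y₁ (_ : y₁ ∈ J) =>
        ⨆ y₂ ∈ J, ENNReal.ofReal |g (x, y₁) - g (x, y₂)| / ENNReal.ofReal |y₁ - y₂|) y₁ h1)
      exact le_iSup₂ (f := fun y₂ (_ : y₂ ∈ J) =>
        ENNReal.ofReal |g (x, y₁) - g (x, y₂)| / ENNReal.ofReal |y₁ - y₂|) y₂ h2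
    have hmul : ENNReal.ofReal |g (x, y₁) - g (x, y₂)| ≤ lipY g * ENNReal.ofReal |y₁ - y₂| :=
      (ENNReal.div_le_iff hne ENNReal.ofReal_ne_top).mp hq
    have : lipY g * ENNReal.ofReal |y₁ - y₂| = ENNReal.ofReal ((lipY g).toReal * |y₁ - y₂|) := by
      rw [ENNReal.ofReal_mul ENNReal.toReal_nonneg, ENNReal.ofReal_toReal h]
    rw [this] at hmul
    exact (ENNReal.ofReal_le_ofReal_iff
      (mul_nonneg ENNReal.toReal_nonneg (abs_nonneg _))).mp hmul

lemma integrable_of_bound {α : Type*} [MeasurableSpace α] {μ : Measure α} [IsFiniteMeasure μ]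
    {φ : α → ℝ} (hφ : AEStronglyMeasurable φ μ) {c : ℝ} (h : ∀ᵐ x ∂μ, |φ x| ≤ c) :
    Integrable φ μ := by
  refine (integrable_const c).mono' hφ ?_
  simpa [Real.norm_eq_abs] using h

lemma abs_integral_le {α : Type*} [MeasurableSpace α] {μ : Measure α} [IsProbabilityMeasure μ]
    {φ : α → ℝ} {c : ℝ} (h : ∀ᵐ x ∂μ, |φ x| ≤ c) : |∫ x, φ x ∂μ| ≤ c := by
  have h2 := norm_integral_le_of_norm_le_const (μ := μ) (C := c)
    (f := φ) (by simpa [Real.norm_eq_abs] using h)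
  simpa [Real.norm_eq_abs, measure_univ] using h2

lemma abs_integral_sub_le {α : Type*} [MeasurableSpace α] {μ : Measure α}
    [IsProbabilityMeasure μ] {φ ψ : α → ℝ} (hφ : Integrable φ μ) (hψ : Integrable ψ μ)
    {c : ℝ} (h : ∀ᵐ x ∂μ, |φ x - ψ x| ≤ c) :
    |(∫ x, φ x ∂μ) - ∫ x, ψ x ∂μ| ≤ c := by
  rw [← integral_sub hφ hψ]
  exact abs_integral_le h

end Aux
set_option maxHeartbeats 2000000 in
/-- Skew products `F(x,y) = (T(x), G(x,y))` with contracting fibers over a base with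
exponential convergence to equilibrium have exponential decay of correlations, provided the
relevant norms grow at most exponentially under composition with `F`. -/
theorem skew_product_decay_of_correlations
    (T : ℝ → ℝ) (G : ℝ × ℝ → ℝ) (F : ℝ × ℝ → ℝ × ℝ)
    (hF : ∀ p, F p = (T p.1, G p)) (hFQ : Set.MapsTo F Sq Sq) (hFmeas : Measurable F)
    (μ : Measure (ℝ × ℝ)) [IsProbabilityMeasure μ] (hμQ : μ Sq = 1)
    (hinv : μ.map F = μ)
    (hTinv : (μ.map Prod.fst).map T = μ.map Prod.fst)
    (hac : μ.map Prod.fst ≪ volume)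
    (α : ℝ) (hα : α ∈ Set.Ioc (0 : ℝ) 1)
    -- (1) exponential convergence to equilibrium of the base map
    (h1 : ∃ C₀ > (0 : ℝ), ∃ Λ₀ ∈ Set.Ioo (0 : ℝ) 1, ∀ f g : ℝ → ℝ, ∀ Kg : ℝ,
      Measurable f → Var1 α f < ⊤ → Measurable g → (∀ x, |g x| ≤ Kg) →
      ∀ n : ℕ, 1 ≤ n →
        ENNReal.ofReal |(∫ x in J, f x * g (T^[n] x)) -
            (∫ x, g x ∂(μ.map Prod.fst)) * ∫ x in J, f x|
          ≤ ENNReal.ofReal (C₀ * Λ₀ ^ n * Kg) * norm1E α f)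
    -- (2) nonsingularity and piecewise monotonicity of the base map
    (h2a : ∀ A : Set ℝ, MeasurableSet A → volume A = 0 → volume (T ⁻¹' A ∩ J) = 0)
    (h2b : ∃ (k : ℕ) (a b : Fin k → ℝ),
      (⋃ i, Set.Icc (a i) (b i)) = J ∧
      ∀ i, ContinuousOn T (Set.Icc (a i) (b i)) ∧ Set.InjOn T (Set.Icc (a i) (b i)))
    -- (3) uniform contraction on vertical leaves
    (lam : ℝ) (hlam : lam < 1)
    (h3 : ∀ x ∈ J, ∀ y₁ ∈ J, ∀ y₂ ∈ J, |G (x, y₁) - G (x, y₂)| ≤ lam * |y₁ - y₂|)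
    -- (4) exponential bound on the norms of compositions
    (h4 : ∃ C₁ > (0 : ℝ), ∃ K > (0 : ℝ), ∀ f : ℝ × ℝ → ℝ, ∀ n : ℕ, 1 ≤ n →
      norm1E α (piF (f ∘ F^[n])) + VarSq (f ∘ F^[n])
        ≤ ENNReal.ofReal (C₁ * K ^ n) * (norm1E α (piF f) + yLipNorm f + VarSq f)) :
    ∃ C₂ > (0 : ℝ), ∃ Λ ∈ Set.Ioo (0 : ℝ) 1, ∀ f g : ℝ × ℝ → ℝ,
      Measurable f → Measurable g → ∀ n : ℕ,
        ENNReal.ofReal |(∫ p, f p * g (F^[n] p) ∂μ) -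
            (∫ p, g p ∂μ) * ∫ p, f p ∂μ|
          ≤ ENNReal.ofReal (C₂ * Λ ^ n) * yLipNorm g *
              (yLipNorm f + norm1E α (piF f) + VarSq f) := by

  classical
  obtain ⟨C₀, hC₀, Λ₀, hΛ₀, h1⟩ := h1
  obtain ⟨C₁, hC₁, K, hK, h4⟩ := h4
  -- basic facts about the contraction rate
  set l : ℝ := max lam (1/2) with hl_def
  have hl0 : (0:ℝ) < l := lt_of_lt_of_le (by norm_num) (le_max_right _ _)
  have hl1 : l < 1 := max_lt hlam (by norm_num)
  have h3' : ∀ x ∈ J, ∀ y₁ ∈ J, ∀ y₂ ∈ J, |G (x, y₁) - G (x, y₂)| ≤ l * |y₁ - y₂| := by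
    intro x hx y₁ h1' y₂ h2'
    exact le_trans (h3 x hx y₁ h1' y₂ h2')
      (mul_le_mul_of_nonneg_right (le_max_left _ _) (abs_nonneg _))
  -- constants
  set K' : ℝ := max K 1 with hK'_def
  have hK'1 : (1:ℝ) ≤ K' := le_max_right _ _
  have hK'0 : (0:ℝ) < K' := lt_of_lt_of_le one_pos hK'1
  have hΛ₀0 : (0:ℝ) < Λ₀ := hΛ₀.1
  have hΛ₀1 : Λ₀ < 1 := hΛ₀.2
  set L : ℝ := -Real.log Λ₀ with hL_def
  have hL : 0 < L := by
    have := Real.log_neg hΛ₀0 hΛ₀1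
    simp only [hL_def]; linarith
  set c : ℝ := Real.log K' with hc_def
  have hc : 0 ≤ c := Real.log_nonneg hK'1
  set β : ℝ := min 1 (L / (4 * (c + 1))) with hβ_def
  have hβ0 : 0 < β := lt_min one_pos (div_pos hL (by linarith))
  have hβ1 : β ≤ 1 := min_le_left _ _
  have hKey : K' ^ (2*β : ℝ) ≤ Λ₀ ^ (-(1/2) : ℝ) := by
    rw [Real.rpow_def_of_pos hK'0, Real.rpow_def_of_pos hΛ₀0]
    apply Real.exp_le_exp.mpr
    have hβle : β ≤ L / (4 * (c + 1)) := min_le_right _ _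
    have h4c : 0 < 4 * (c + 1) := by linarith
    have hb : β * (4 * (c + 1)) ≤ L := by
      rw [← le_div_iff₀ h4c]; exact hβle
    nlinarith [mul_nonneg hβ0.le hc]
  set Λ : ℝ := max (max (l ^ (β:ℝ)) (Λ₀ ^ (β:ℝ))) (Λ₀ ^ ((1/2:ℝ))) with hΛ_def
  have hΛpos : 0 < Λ :=
    lt_of_lt_of_le (Real.rpow_pos_of_pos hl0 β) (le_trans (le_max_left _ _) (le_max_left _ _))
  have hΛlt1 : Λ < 1 := by
    apply max_lt (max_lt ?_ ?_) ?_
    · exact Real.rpow_lt_one hl0.le hl1 hβ0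
    · exact Real.rpow_lt_one hΛ₀0.le hΛ₀1 hβ0
    · exact Real.rpow_lt_one hΛ₀0.le hΛ₀1 (by norm_num)
  set C₂ : ℝ := 5 + 2*C₀ + C₀*C₁*K'^4 with hC₂_def
  have hC₂0 : 0 < C₂ := by positivity
  refine ⟨C₂, hC₂0, Λ, ⟨hΛpos, hΛlt1⟩, ?_⟩
  intro f g hf hg n
  -- measurability of T
  have hT : Measurable T := by
    have hTe : T = fun x => (F (x, 0)).1 := funext fun x => by rw [hF]
    rw [hTe]
    exact measurable_fst.comp (hFmeas.comp (measurable_id.prodMk measurable_const))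
  -- a.e. membership in Sq
  have hae : ∀ᵐ p ∂μ, p ∈ Sq := by
    rw [ae_iff]
    have : μ Sqᶜ = 0 := by
      have h := measure_compl Sq_meas (measure_ne_top μ Sq)
      rw [hμQ, measure_univ] at h
      simpa using h
    exact this
  have haeI : ∀ᵐ p ∂μ, ∀ k : ℕ, F^[k] p ∈ Sq :=
    hae.mono (fun p hp k => hFQ.iterate k hp)
  -- first coordinate of iterates
  have fstIter : ∀ (k : ℕ) (p : ℝ × ℝ), (F^[k] p).1 = T^[k] p.1 := by
    intro k
    induction k with
    | zero => intro p; simp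
    | succ k ih =>
      intro p
      rw [Function.iterate_succ_apply, Function.iterate_succ_apply, ih (F p), hF]
  -- T maps J into J
  have hTJ : ∀ k : ℕ, ∀ x ∈ J, T^[k] x ∈ J := by
    intro k x hx
    have h1' : F^[k] (x, 0) ∈ Sq := hFQ.iterate k (mem_Sq.mpr ⟨hx, zero_mem_J⟩)
    have := (mem_Sq.mp (by rwa [← Prod.mk.eta (p := F^[k] (x,0))] at h1')).1
    rwa [fstIter] at this
  -- contraction of fibers
  have contr : ∀ (k : ℕ) (x y y' : ℝ), (x, y) ∈ Sq → (x, y') ∈ Sq →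
      |(F^[k] (x, y)).2 - (F^[k] (x, y')).2| ≤ l ^ k * |y - y'| := by
    intro k
    induction k with
    | zero => intro x y y' _ _; simp
    | succ k ih =>
      intro x y y' hy hy'
      rw [Function.iterate_succ_apply, Function.iterate_succ_apply, hF, hF]
      have hx := (mem_Sq.mp hy).1
      have hyJ := (mem_Sq.mp hy).2
      have hy'J := (mem_Sq.mp hy').2
      have hG : (T x, G (x, y)) ∈ Sq := by rw [← hF (x, y)]; exact hFQ hy
      have hG' : (T x, G (x, y')) ∈ Sq := by rw [← hF (x, y')]; exact hFQ hy'
      calc |(F^[k] (T x, G (x,y))).2 - (F^[k] (T x, G (x,y'))).2|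
          ≤ l ^ k * |G (x, y) - G (x, y')| := ih (T x) _ _ hG hG'
        _ ≤ l ^ k * (l * |y - y'|) := by
            refine mul_le_mul_of_nonneg_left ?_ (pow_nonneg hl0.le k)
            exact h3' x hx y hyJ y' hy'J
        _ = l ^ (k+1) * |y - y'| := by ring
  -- invariance of μ under iterates
  have hInv : ∀ (φ : ℝ × ℝ → ℝ), Measurable φ → ∀ k : ℕ,
      (∫ p, φ (F^[k] p) ∂μ) = ∫ p, φ p ∂μ := by
    intro φ hφ k
    induction k with
    | zero => simp
    | succ k ih =>
      have hφk : Measurable fun p => φ (F^[k] p) := hφ.comp (hFmeas.iterate k)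
      calc (∫ p, φ (F^[k+1] p) ∂μ) = ∫ p, φ (F^[k] (F p)) ∂μ := by
            simp only [Function.iterate_succ_apply]
        _ = ∫ p, φ (F^[k] p) ∂(μ.map F) := by
            rw [integral_map hFmeas.aemeasurable hφk.aestronglyMeasurable]
        _ = ∫ p, φ (F^[k] p) ∂μ := by rw [hinv]
        _ = ∫ p, φ p ∂μ := ih
  -- ν : the base marginal
  set ν : Measure ℝ := μ.map Prod.fst with hν_def
  have hνprob : IsProbabilityMeasure ν := Measure.isProbabilityMeasure_map measurable_fst.aemeasurable
  -- trivial case : g vanishes on Sq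
  by_cases hg0 : yLipNorm g = 0
  · have hsupg : supQ g = 0 := by
      have := hg0; rw [yLipNorm, add_eq_zero] at this; exact this.1
    have hgz : ∀ p ∈ Sq, g p = 0 := fun p hp => supQ_eq_zero hsupg hp
    have hgint : (∫ p, g p ∂μ) = 0 := by
      rw [integral_eq_zero_of_ae]
      exact hae.mono fun p hp => hgz p hp
    have hfgint : (∫ p, f p * g (F^[n] p) ∂μ) = 0 := by
      rw [integral_eq_zero_of_ae]
      refine haeI.mono fun p hp => ?_
      show f p * g (F^[n] p) = 0
      rw [hgz _ (hp n), mul_zero]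
    rw [hfgint, hgint, zero_mul, sub_zero, abs_zero, ENNReal.ofReal_zero]
    exact zero_le
  -- case where some norm is infinite
  by_cases hfin : yLipNorm f ≠ ⊤ ∧ norm1E α (piF f) ≠ ⊤ ∧ VarSq f ≠ ⊤ ∧ yLipNorm g ≠ ⊤
  · obtain ⟨hftop, hptop, hvtop, hgtop⟩ := hfin
    have hsgtop : supQ g ≠ ⊤ := ne_top_of_le_ne_top hgtop le_self_add
    have hlgtop : lipY g ≠ ⊤ := ne_top_of_le_ne_top hgtop le_add_self
    have hsftop : supQ f ≠ ⊤ := ne_top_of_le_ne_top hftop le_self_add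
    have hlftop : lipY f ≠ ⊤ := ne_top_of_le_ne_top hftop le_add_self
    set Sg : ℝ := (supQ g).toReal with hSg_def
    set Lg : ℝ := (lipY g).toReal with hLg_def
    set Sf : ℝ := (supQ f).toReal with hSf_def
    set Lf : ℝ := (lipY f).toReal with hLf_def
    set P' : ℝ := (norm1E α (piF f)).toReal with hP'_def
    set V' : ℝ := (VarSq f).toReal with hV'_def
    have hSg0 : 0 ≤ Sg := ENNReal.toReal_nonneg
    have hLg0 : 0 ≤ Lg := ENNReal.toReal_nonneg
    have hSf0 : 0 ≤ Sf := ENNReal.toReal_nonneg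
    have hLf0 : 0 ≤ Lf := ENNReal.toReal_nonneg
    have hP'0 : 0 ≤ P' := ENNReal.toReal_nonneg
    have hV'0 : 0 ≤ V' := ENNReal.toReal_nonneg
    have hSg : ∀ p ∈ Sq, |g p| ≤ Sg := fun p hp => supQ_spec hsgtop hp
    have hSf : ∀ p ∈ Sq, |f p| ≤ Sf := fun p hp => supQ_spec hsftop hp
    have hLg : ∀ x ∈ J, ∀ y₁ ∈ J, ∀ y₂ ∈ J, |g (x, y₁) - g (x, y₂)| ≤ Lg * |y₁ - y₂| :=
      fun x hx y₁ h1' y₂ h2' => lipY_spec hlgtop hx h1' h2'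
    have hLf : ∀ x ∈ J, ∀ y₁ ∈ J, ∀ y₂ ∈ J, |f (x, y₁) - f (x, y₂)| ≤ Lf * |y₁ - y₂| :=
      fun x hx y₁ h1' y₂ h2' => lipY_spec hlftop hx h1' h2'
    set Dg : ℝ := Sg + Lg with hDg_def
    set Df : ℝ := P' + (Sf + Lf) + V' with hDf_def
    have hDg0 : 0 ≤ Dg := by positivity
    have hDf0 : 0 ≤ Df := by positivity
    -- parameters
    set m : ℕ := Nat.ceil (β * n) with hm_def
    have hm1 : β * n ≤ (m:ℝ) := Nat.le_ceil _
    have hm2 : (m:ℝ) ≤ β * n + 1 := by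
      have := Nat.ceil_lt_add_one (a := β * (n:ℝ)) (by positivity)
      exact le_of_lt (by exact_mod_cast this)
    have hmn : m ≤ n := by
      rw [hm_def, Nat.ceil_le]
      exact mul_le_of_le_one_left (Nat.cast_nonneg n) hβ1
    clear_value m
    set N : ℕ := n + m + 2 with hN_def
    set q : ℕ := 2 * m + 2 with hq_def
    -- auxiliary functions
    set gh : ℝ → ℝ := fun x => if x ∈ J then g (F^[m] (x, 0)) else 0 with hgh_def
    set fh : ℝ → ℝ := fun x => if x ∈ J then f (F^[m+1] (x, 0)) else 0 with hfh_def
    set f₁ : ℝ → ℝ := piF (f ∘ F^[q]) with hf₁_def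
    have hghm : Measurable gh :=
      Measurable.ite J_meas
        (hg.comp ((hFmeas.iterate m).comp (measurable_id.prodMk measurable_const)))
        measurable_const
    have hfhm : Measurable fh :=
      Measurable.ite J_meas
        (hf.comp ((hFmeas.iterate (m+1)).comp (measurable_id.prodMk measurable_const)))
        measurable_const
    have hfFq : Measurable (f ∘ F^[q]) := hf.comp (hFmeas.iterate q)
    have hf₁m : Measurable f₁ := by
      have := hfFq.stronglyMeasurable.integral_prod_right'
        (ν := volume.restrict J)
      exact this.measurable
    have hghb : ∀ x, |gh x| ≤ Sg := by
      intro x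
      by_cases hx : x ∈ J
      · rw [hgh_def]; simp only [if_pos hx]
        exact hSg _ (hFQ.iterate m (mem_Sq.mpr ⟨hx, zero_mem_J⟩))
      · rw [hgh_def]; simp only [if_neg hx, abs_zero]; exact hSg0
    have hfhb : ∀ x, |fh x| ≤ Sf := by
      intro x
      by_cases hx : x ∈ J
      · rw [hfh_def]; simp only [if_pos hx]
        exact hSf _ (hFQ.iterate (m+1) (mem_Sq.mpr ⟨hx, zero_mem_J⟩))
      · rw [hfh_def]; simp only [if_neg hx, abs_zero]; exact hSf0
    -- the key `flattening` estimates
    have hdiff : ∀ (φ : ℝ × ℝ → ℝ) (Lφ : ℝ), 0 ≤ Lφ →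
        (∀ x ∈ J, ∀ y₁ ∈ J, ∀ y₂ ∈ J, |φ (x, y₁) - φ (x, y₂)| ≤ Lφ * |y₁ - y₂|) →
        ∀ (k : ℕ) (w : ℝ × ℝ), w ∈ Sq →
          |φ (F^[k] w) - φ (F^[k] (w.1, 0))| ≤ Lφ * l ^ k * (1/2) := by
      rintro φ Lφ hLφ0 hφ k ⟨x, y⟩ hw
      have hx : x ∈ J := (mem_Sq.mp hw).1
      have hy : y ∈ J := (mem_Sq.mp hw).2
      have hw0 : ((x:ℝ), (0:ℝ)) ∈ Sq := mem_Sq.mpr ⟨hx, zero_mem_J⟩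
      have hm1' : F^[k] (x, y) ∈ Sq := hFQ.iterate k hw
      have hm2' : F^[k] (x, 0) ∈ Sq := hFQ.iterate k hw0
      have e1 : φ (F^[k] (x, y)) = φ ((F^[k] (x,y)).1, (F^[k] (x,y)).2) := by rw [Prod.mk.eta]
      have e2 : φ (F^[k] (x, 0)) = φ ((F^[k] (x,y)).1, (F^[k] (x,0)).2) := by
        rw [show (F^[k] (x,y)).1 = (F^[k] (x,0)).1 by rw [fstIter, fstIter], Prod.mk.eta]
      have hJ1 : (F^[k] (x,y)).1 ∈ J := (mem_Sq.mp (by rwa [← Prod.mk.eta (p := F^[k] (x,y))] at hm1')).1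
      have hJ2 : (F^[k] (x,y)).2 ∈ J := (mem_Sq.mp (by rwa [← Prod.mk.eta (p := F^[k] (x,y))] at hm1')).2
      have hJ3 : (F^[k] (x,0)).2 ∈ J := (mem_Sq.mp (by rwa [← Prod.mk.eta (p := F^[k] (x,0))] at hm2')).2
      calc |φ (F^[k] (x, y)) - φ (F^[k] (x, 0))|
          = |φ ((F^[k] (x,y)).1, (F^[k] (x,y)).2) - φ ((F^[k] (x,y)).1, (F^[k] (x,0)).2)| := by
            rw [← e1, ← e2]
        _ ≤ Lφ * |(F^[k] (x,y)).2 - (F^[k] (x,0)).2| := hφ _ hJ1 _ hJ2 _ hJ3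
        _ ≤ Lφ * (l ^ k * |y - 0|) := by
            refine mul_le_mul_of_nonneg_left ?_ hLφ0
            exact contr k x y 0 hw hw0
        _ ≤ Lφ * (l ^ k * (1/2)) := by
            refine mul_le_mul_of_nonneg_left ?_ hLφ0
            refine mul_le_mul_of_nonneg_left ?_ (pow_nonneg hl0.le k)
            rw [sub_zero]
            exact abs_le_half_of_mem_J hy
        _ = Lφ * l ^ k * (1/2) := by ring
    have hdf : ∀ (k : ℕ) (w : ℝ × ℝ), w ∈ Sq →
        |f (F^[k] w) - f (F^[k] (w.1, 0))| ≤ Lf * l ^ k * (1/2) := hdiff f Lf hLf0 hLf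
    have hdg : ∀ (k : ℕ) (w : ℝ × ℝ), w ∈ Sq →
        |g (F^[k] w) - g (F^[k] (w.1, 0))| ≤ Lg * l ^ k * (1/2) := hdiff g Lg hLg0 hLg
    -- the integrals in the chain
    set A0 : ℝ := ∫ p, f p * g (F^[n] p) ∂μ with hA0_def
    set A1 : ℝ := ∫ x, fh x * gh (T^[n+1] x) ∂ν with hA1_def
    set A2 : ℝ := ∫ x in J, fh (T^[m+1] x) * gh (T^[N] x) with hA2_def
    set A3 : ℝ := ∫ x in J, f₁ x * gh (T^[N] x) with hA3_def
    set Ig : ℝ := ∫ x, gh x ∂ν with hIg_def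
    set If₁ : ℝ := ∫ x in J, f₁ x with hIf₁_def
    set B0 : ℝ := (∫ p, g p ∂μ) * ∫ p, f p ∂μ with hB0_def
    clear_value A0 A1 A2 A3 Ig If₁ B0
    -- Step 1 : |A0 - A1| small
    have hS1 : |A0 - A1| ≤ Sg * (Lf * l ^ (m+1) * (1/2)) + Sf * (Lg * l ^ m * (1/2)) := by
      have hφm : Measurable fun p : ℝ × ℝ => f (F^[m+1] p) * g (F^[n+(m+1)] p) :=
        (hf.comp (hFmeas.iterate (m+1))).mul (hg.comp (hFmeas.iterate (n+(m+1))))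
      have hA0' : A0 = ∫ p, f (F^[m+1] p) * g (F^[n+(m+1)] p) ∂μ := by
        rw [hA0_def, ← hInv (fun p => f p * g (F^[n] p))
          (hf.mul (hg.comp (hFmeas.iterate n))) (m+1)]
        congr 1
        funext p
        rw [← Function.iterate_add_apply]
      have hψm : Measurable fun p : ℝ × ℝ => fh p.1 * gh (T^[n+1] p.1) :=
        ((hfhm.comp measurable_fst).mul
          ((hghm.comp (hT.iterate (n+1))).comp measurable_fst))
      have hψ0 : Measurable fun x : ℝ => fh x * gh (T^[n+1] x) :=
        hfhm.mul (hghm.comp (hT.iterate (n+1)))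
      have hA1' : A1 = ∫ p, fh p.1 * gh (T^[n+1] p.1) ∂μ := by
        rw [hA1_def, hν_def]
        exact integral_map measurable_fst.aemeasurable hψ0.aestronglyMeasurable
      rw [hA0', hA1']
      have hint1 : Integrable (fun p : ℝ × ℝ => f (F^[m+1] p) * g (F^[n+(m+1)] p)) μ := by
        refine integrable_of_bound hφm.aestronglyMeasurable (c := Sf * Sg)
          (haeI.mono fun p hp => ?_)
        rw [abs_mul]
        exact mul_le_mul (hSf _ (hp (m+1))) (hSg _ (hp (n+(m+1)))) (abs_nonneg _) hSf0
      have hint2 : Integrable (fun p : ℝ × ℝ => fh p.1 * gh (T^[n+1] p.1)) μ := by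
        refine integrable_of_bound hψm.aestronglyMeasurable (c := Sf * Sg)
          (Filter.Eventually.of_forall fun p => ?_)
        rw [abs_mul]
        exact mul_le_mul (hfhb _) (hghb _) (abs_nonneg _) hSf0
      refine abs_integral_sub_le hint1 hint2 ?_
      refine haeI.mono ?_
      rintro ⟨x, y⟩ hp
      have hp0 : ((x:ℝ), y) ∈ Sq := by simpa using hp 0
      have hx : x ∈ J := (mem_Sq.mp hp0).1
      have d1 : |f (F^[m+1] (x,y)) - fh x| ≤ Lf * l ^ (m+1) * (1/2) := by
        have := hdf (m+1) (x,y) hp0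
        simpa [hfh_def, if_pos hx] using this
      have d2 : |g (F^[n+(m+1)] (x,y)) - gh (T^[n+1] x)| ≤ Lg * l ^ m * (1/2) := by
        have e : F^[n+(m+1)] (x,y) = F^[m] (F^[n+1] (x,y)) := by
          rw [← Function.iterate_add_apply]
          congr 1
          omega
        have hw : F^[n+1] (x,y) ∈ Sq := hp (n+1)
        have hw1 : (F^[n+1] (x,y)).1 ∈ J := by
          have := (mem_Sq.mp (by rwa [← Prod.mk.eta (p := F^[n+1] (x,y))] at hw)).1
          exact this
        have e2 : gh (T^[n+1] x) = g (F^[m] ((F^[n+1] (x,y)).1, 0)) := by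
          rw [hgh_def]
          simp only [show T^[n+1] x = (F^[n+1] (x,y)).1 from (fstIter (n+1) (x,y)).symm,
            if_pos hw1]
        rw [e, e2]
        exact hdg m _ hw
      have bg : |g (F^[n+(m+1)] (x,y))| ≤ Sg := hSg _ (hp (n+(m+1)))
      have bfh : |fh x| ≤ Sf := hfhb x
      calc |f (F^[m+1] (x,y)) * g (F^[n+(m+1)] (x,y)) - fh x * gh (T^[n+1] x)|
          = |(f (F^[m+1] (x,y)) - fh x) * g (F^[n+(m+1)] (x,y))
              + fh x * (g (F^[n+(m+1)] (x,y)) - gh (T^[n+1] x))| := by ring_nf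
        _ ≤ |(f (F^[m+1] (x,y)) - fh x) * g (F^[n+(m+1)] (x,y))|
              + |fh x * (g (F^[n+(m+1)] (x,y)) - gh (T^[n+1] x))| := abs_add_le _ _
        _ ≤ (Lf * l ^ (m+1) * (1/2)) * Sg + Sf * (Lg * l ^ m * (1/2)) := by
            rw [abs_mul, abs_mul]
            refine add_le_add ?_ ?_
            · exact mul_le_mul d1 bg (abs_nonneg _) (by positivity)
            · exact mul_le_mul bfh d2 (abs_nonneg _) hSf0
        _ = Sg * (Lf * l ^ (m+1) * (1/2)) + Sf * (Lg * l ^ m * (1/2)) := by ring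
    -- a reusable form of hypothesis (1) with `f = 1`
    have hbase : ∀ (φ : ℝ → ℝ), Measurable φ → ∀ (Kφ : ℝ), (∀ x, |φ x| ≤ Kφ) →
        ∀ k : ℕ, 1 ≤ k → |(∫ x in J, φ (T^[k] x)) - ∫ x, φ x ∂ν| ≤ C₀ * Λ₀ ^ k * Kφ := by
      intro φ hφ Kφ hKφ k hk
      have hKφ0 : 0 ≤ Kφ := le_trans (abs_nonneg _) (hKφ 0)
      have hvar1 : Var1 α (fun _ => (1:ℝ)) < ⊤ := by
        rw [Var1_one]; exact ENNReal.zero_lt_top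
      have happ := h1 (fun _ => 1) φ Kφ measurable_const hvar1 hφ hKφ k hk
      rw [norm1E_one, mul_one] at happ
      simp only [one_mul] at happ
      rw [setIntegral_J_one, mul_one] at happ
      exact (ENNReal.ofReal_le_ofReal_iff
        (mul_nonneg (mul_nonneg hC₀.le (pow_nonneg hΛ₀0.le k)) hKφ0)).mp happ
    -- Step 2 : |A1 - A2| small
    have hS2 : |A1 - A2| ≤ C₀ * Λ₀ ^ (m+1) * (Sf * Sg) := by
      set G0 : ℝ → ℝ := fun x => fh x * gh (T^[n+1] x) with hG0_def
      have hG0m : Measurable G0 := hfhm.mul (hghm.comp (hT.iterate (n+1)))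
      have hG0b : ∀ x, |G0 x| ≤ Sf * Sg := by
        intro x
        rw [hG0_def]
        simp only [abs_mul]
        exact mul_le_mul (hfhb _) (hghb _) (abs_nonneg _) hSf0
      have happ := hbase G0 hG0m (Sf * Sg) hG0b (m+1) (by omega)
      have e : (∫ x in J, G0 (T^[m+1] x)) = A2 := by
        rw [hA2_def]
        congr 1
        funext x
        rw [hG0_def]
        simp only []
        congr 2
        rw [← Function.iterate_add_apply]
        congr 1
        omega
      have e2 : (∫ x, G0 x ∂ν) = A1 := by rw [hA1_def]
      rw [e, e2] at happ
      rw [abs_sub_comm]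
      exact happ
    -- pointwise comparison of `f₁` with `fh ∘ T^[m+1]`
    have hf₁bJ : ∀ x ∈ J, |f₁ x| ≤ Sf := by
      intro x hx
      rw [hf₁_def]
      refine abs_integral_le (μ := volume.restrict J) ?_
      refine (ae_restrict_iff' J_meas).mpr (Filter.Eventually.of_forall fun t ht => ?_)
      exact hSf _ (hFQ.iterate q (mem_Sq.mpr ⟨hx, ht⟩))
    have hintq : ∀ x ∈ J, Integrable (fun t => f (F^[q] (x, t))) (volume.restrict J) := by
      intro x hx
      refine integrable_of_bound ?_ (c := Sf) ?_
      · exact (hf.comp ((hFmeas.iterate q).comp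
          (measurable_const.prodMk measurable_id))).aestronglyMeasurable
      · refine (ae_restrict_iff' J_meas).mpr (Filter.Eventually.of_forall fun t ht => ?_)
        exact hSf _ (hFQ.iterate q (mem_Sq.mpr ⟨hx, ht⟩))
    have hpt : ∀ x ∈ J, |fh (T^[m+1] x) - f₁ x| ≤ Lf * l ^ (m+1) * (1/2) := by
      intro x hx
      have hTr : T^[m+1] x ∈ J := hTJ (m+1) x hx
      have efh : fh (T^[m+1] x) = f (F^[m+1] (T^[m+1] x, 0)) := by
        rw [hfh_def]; simp only [if_pos hTr]
      have hptw : ∀ t ∈ J, |f (F^[q] (x, t)) - fh (T^[m+1] x)| ≤ Lf * l ^ (m+1) * (1/2) := by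
        intro t ht
        have e : F^[q] (x, t) = F^[m+1] (F^[m+1] (x, t)) := by
          rw [← Function.iterate_add_apply]
          congr 1
          omega
        have hw : F^[m+1] (x, t) ∈ Sq := hFQ.iterate (m+1) (mem_Sq.mpr ⟨hx, ht⟩)
        have hw1 : (F^[m+1] (x, t)).1 = T^[m+1] x := fstIter (m+1) (x, t)
        have := hdf (m+1) (F^[m+1] (x, t)) hw
        rw [hw1] at this
        rw [e, efh]
        exact this
      have ef₁ : f₁ x = ∫ t in J, f (F^[q] (x, t)) := rfl
      rw [abs_sub_comm, ef₁]
      have esub : (∫ t in J, f (F^[q] (x, t))) - fh (T^[m+1] x)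
          = ∫ t in J, (f (F^[q] (x, t)) - fh (T^[m+1] x)) := by
        rw [integral_sub (hintq x hx) (integrable_const _), integral_const]
        simp [measure_univ]
      rw [esub]
      refine abs_integral_le (μ := volume.restrict J) ?_
      refine (ae_restrict_iff' J_meas).mpr (Filter.Eventually.of_forall fun t ht => hptw t ht)
    -- Step 3 : |A2 - A3| small
    have hS3 : |A2 - A3| ≤ (Lf * l ^ (m+1) * (1/2)) * Sg := by
      rw [hA2_def, hA3_def]
      have hint1 : Integrable (fun x => fh (T^[m+1] x) * gh (T^[N] x)) (volume.restrict J) := by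
        refine integrable_of_bound ?_ (c := Sf * Sg) ?_
        · exact ((hfhm.comp (hT.iterate (m+1))).mul
            (hghm.comp (hT.iterate N))).aestronglyMeasurable
        · refine Filter.Eventually.of_forall fun x => ?_
          rw [abs_mul]
          exact mul_le_mul (hfhb _) (hghb _) (abs_nonneg _) hSf0
      have hint2 : Integrable (fun x => f₁ x * gh (T^[N] x)) (volume.restrict J) := by
        refine integrable_of_bound ?_ (c := Sf * Sg) ?_
        · exact (hf₁m.mul (hghm.comp (hT.iterate N))).aestronglyMeasurable
        · refine (ae_restrict_iff' J_meas).mpr (Filter.Eventually.of_forall fun x hx => ?_)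
          rw [abs_mul]
          exact mul_le_mul (hf₁bJ x hx) (hghb _) (abs_nonneg _) hSf0
      refine abs_integral_sub_le hint1 hint2 ?_
      refine (ae_restrict_iff' J_meas).mpr (Filter.Eventually.of_forall fun x hx => ?_)
      have : fh (T^[m+1] x) * gh (T^[N] x) - f₁ x * gh (T^[N] x)
          = (fh (T^[m+1] x) - f₁ x) * gh (T^[N] x) := by ring
      rw [this, abs_mul]
      exact mul_le_mul (hpt x hx) (hghb _) (abs_nonneg _) (by positivity)
    -- Step 4 : |A3 - Ig * If₁| via hypothesis (1) applied to f₁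
    set DD : ℝ≥0∞ := norm1E α (piF f) + yLipNorm f + VarSq f with hDD_def
    have hDDtop : DD ≠ ⊤ := by
      rw [hDD_def]
      exact ENNReal.add_ne_top.mpr ⟨ENNReal.add_ne_top.mpr ⟨hptop, hftop⟩, hvtop⟩
    have hyf : yLipNorm f = ENNReal.ofReal (Sf + Lf) := by
      rw [yLipNorm, ENNReal.ofReal_add hSf0 hLf0, hSf_def, hLf_def,
        ENNReal.ofReal_toReal hsftop, ENNReal.ofReal_toReal hlftop]
    have hDDr : DD = ENNReal.ofReal Df := by
      rw [hDD_def, hyf, hDf_def]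
      rw [show norm1E α (piF f) = ENNReal.ofReal P' by
          rw [hP'_def, ENNReal.ofReal_toReal hptop],
        show VarSq f = ENNReal.ofReal V' by rw [hV'_def, ENNReal.ofReal_toReal hvtop]]
      rw [← ENNReal.ofReal_add hP'0 (by linarith), ← ENNReal.ofReal_add (by positivity) hV'0]
    have hnormf₁ : norm1E α f₁ ≤ ENNReal.ofReal (C₁ * K ^ q) * DD :=
      le_trans le_self_add (h4 f q (by rw [hq_def]; omega))
    have hvarf₁ : Var1 α f₁ < ⊤ := by
      refine lt_of_le_of_lt (le_trans le_self_add hnormf₁) ?_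
      exact lt_top_iff_ne_top.mpr (ENNReal.mul_ne_top ENNReal.ofReal_ne_top hDDtop)
    have hS4 : |A3 - Ig * If₁| ≤ C₀ * Λ₀ ^ N * Sg * (C₁ * K ^ q * Df) := by
      have happ := h1 f₁ gh Sg hf₁m hvarf₁ hghm hghb N (by rw [hN_def]; omega)
      rw [← hA3_def, ← hIg_def, ← hIf₁_def] at happ
      have step : ENNReal.ofReal |A3 - Ig * If₁|
          ≤ ENNReal.ofReal (C₀ * Λ₀ ^ N * Sg * (C₁ * K ^ q * Df)) := by
        refine le_trans happ ?_
        refine le_trans (mul_le_mul_right hnormf₁ _) ?_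
        have hKq0 : (0:ℝ) ≤ C₁ * K ^ q := mul_nonneg hC₁.le (pow_nonneg hK.le q)
        have hCN0 : (0:ℝ) ≤ C₀ * Λ₀ ^ N * Sg :=
          mul_nonneg (mul_nonneg hC₀.le (pow_nonneg hΛ₀0.le N)) hSg0
        rw [hDDr, ← ENNReal.ofReal_mul hKq0, ← ENNReal.ofReal_mul hCN0]
      refine (ENNReal.ofReal_le_ofReal_iff ?_).mp step
      have hKq0 : (0:ℝ) ≤ C₁ * K ^ q := mul_nonneg hC₁.le (pow_nonneg hK.le q)
      exact mul_nonneg (mul_nonneg (mul_nonneg hC₀.le (pow_nonneg hΛ₀0.le N)) hSg0)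
        (mul_nonneg hKq0 hDf0)
    -- Step 5 : comparing the product terms
    have hflat : ∀ (φ : ℝ × ℝ → ℝ), Measurable φ → ∀ (Sφ Lφ : ℝ),
        (∀ p ∈ Sq, |φ p| ≤ Sφ) →
        ∀ (k : ℕ) (φh : ℝ → ℝ), Measurable φh → (∀ x, |φh x| ≤ Sφ) →
        (∀ x ∈ J, φh x = φ (F^[k] (x, 0))) →
        (∀ (w : ℝ × ℝ), w ∈ Sq → |φ (F^[k] w) - φ (F^[k] (w.1, 0))| ≤ Lφ * l ^ k * (1/2)) →
        |(∫ x, φh x ∂ν) - ∫ p, φ p ∂μ| ≤ Lφ * l ^ k * (1/2) := by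
      intro φ hφ Sφ Lφ hφb k φh hφhm hφhb hφh hφd
      have h1' : (∫ x, φh x ∂ν) = ∫ p, φh p.1 ∂μ := by
        rw [hν_def]
        exact integral_map measurable_fst.aemeasurable hφhm.aestronglyMeasurable
      have h2' : (∫ p, φ p ∂μ) = ∫ p, φ (F^[k] p) ∂μ := (hInv φ hφ k).symm
      rw [h1', h2']
      have hint1 : Integrable (fun p : ℝ × ℝ => φh p.1) μ :=
        integrable_of_bound (hφhm.comp measurable_fst).aestronglyMeasurable
          (Filter.Eventually.of_forall fun p => hφhb _)
      have hint2 : Integrable (fun p : ℝ × ℝ => φ (F^[k] p)) μ :=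
        integrable_of_bound (hφ.comp (hFmeas.iterate k)).aestronglyMeasurable
          (haeI.mono fun p hp => hφb _ (hp k))
      refine abs_integral_sub_le hint1 hint2 ?_
      refine haeI.mono ?_
      rintro ⟨x, y⟩ hp
      have hp0 : ((x:ℝ), y) ∈ Sq := by simpa using hp 0
      have hx : x ∈ J := (mem_Sq.mp hp0).1
      rw [show φh ((x:ℝ), y).1 = φ (F^[k] (((x:ℝ),y).1, 0)) from hφh x hx, abs_sub_comm]
      exact hφd (x,y) hp0
    have hIg2 : |Ig - ∫ p, g p ∂μ| ≤ Lg * l ^ m * (1/2) := by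
      rw [hIg_def]
      refine hflat g hg Sg Lg hSg m gh hghm hghb ?_ (fun w hw => hdg m w hw)
      intro x hx
      rw [hgh_def]; simp only [if_pos hx]
    have hfh2 : |(∫ x, fh x ∂ν) - ∫ p, f p ∂μ| ≤ Lf * l ^ (m+1) * (1/2) := by
      refine hflat f hf Sf Lf hSf (m+1) fh hfhm hfhb ?_ (fun w hw => hdf (m+1) w hw)
      intro x hx
      rw [hfh_def]; simp only [if_pos hx]
    have hfh3 : |(∫ x in J, fh (T^[m+1] x)) - ∫ x, fh x ∂ν| ≤ C₀ * Λ₀ ^ (m+1) * Sf :=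
      hbase fh hfhm Sf hfhb (m+1) (by omega)
    have hfh4 : |If₁ - ∫ x in J, fh (T^[m+1] x)| ≤ Lf * l ^ (m+1) * (1/2) := by
      rw [hIf₁_def]
      have hint1 : Integrable f₁ (volume.restrict J) := by
        refine integrable_of_bound hf₁m.aestronglyMeasurable (c := Sf) ?_
        exact (ae_restrict_iff' J_meas).mpr (Filter.Eventually.of_forall fun x hx => hf₁bJ x hx)
      have hint2 : Integrable (fun x => fh (T^[m+1] x)) (volume.restrict J) :=
        integrable_of_bound ((hfhm.comp (hT.iterate (m+1)))).aestronglyMeasurable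
          (Filter.Eventually.of_forall fun x => hfhb _)
      refine abs_integral_sub_le hint1 hint2 ?_
      refine (ae_restrict_iff' J_meas).mpr (Filter.Eventually.of_forall fun x hx => ?_)
      rw [abs_sub_comm]
      exact hpt x hx
    have hIf : |If₁ - ∫ p, f p ∂μ| ≤ Lf * l ^ (m+1) + C₀ * Λ₀ ^ (m+1) * Sf := by
      have t1 : |If₁ - ∫ p, f p ∂μ| ≤ |If₁ - ∫ x in J, fh (T^[m+1] x)|
          + |(∫ x in J, fh (T^[m+1] x)) - ∫ x, fh x ∂ν|
          + |(∫ x, fh x ∂ν) - ∫ p, f p ∂μ| := by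
        have u1 := abs_sub_le If₁ (∫ x in J, fh (T^[m+1] x)) (∫ p, f p ∂μ)
        have u2 := abs_sub_le (∫ x in J, fh (T^[m+1] x)) (∫ x, fh x ∂ν) (∫ p, f p ∂μ)
        linarith only [u1, u2]
      linarith only [t1, hfh4, hfh3, hfh2]
    have hIgb : |Ig| ≤ Sg := by
      rw [hIg_def]
      exact abs_integral_le (Filter.Eventually.of_forall fun x => hghb x)
    have hfb : |∫ p, f p ∂μ| ≤ Sf :=
      abs_integral_le (hae.mono fun p hp => hSf p hp)
    have hS5 : |Ig * If₁ - B0| ≤ Sg * (Lf * l ^ (m+1) + C₀ * Λ₀ ^ (m+1) * Sf)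
        + (Lg * l ^ m * (1/2)) * Sf := by
      have e : Ig * If₁ - B0 = Ig * (If₁ - ∫ p, f p ∂μ)
          + (Ig - ∫ p, g p ∂μ) * ∫ p, f p ∂μ := by
        rw [hB0_def]; ring
      calc |Ig * If₁ - B0|
          ≤ |Ig * (If₁ - ∫ p, f p ∂μ)| + |(Ig - ∫ p, g p ∂μ) * ∫ p, f p ∂μ| := by
            rw [e]; exact abs_add_le _ _
        _ ≤ Sg * (Lf * l ^ (m+1) + C₀ * Λ₀ ^ (m+1) * Sf) + (Lg * l ^ m * (1/2)) * Sf := by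
            rw [abs_mul, abs_mul]
            refine add_le_add ?_ ?_
            · exact mul_le_mul hIgb hIf (abs_nonneg _)
                (by positivity)
            · exact mul_le_mul hIg2 hfb (abs_nonneg _)
                (by positivity)
    -- total triangle inequality
    have htot : |A0 - B0| ≤ |A0 - A1| + |A1 - A2| + |A2 - A3| + |A3 - Ig * If₁|
        + |Ig * If₁ - B0| := by
      have u1 := abs_sub_le A0 A1 B0
      have u2 := abs_sub_le A1 A2 B0
      have u3 := abs_sub_le A2 A3 B0
      have u4 := abs_sub_le A3 (Ig * If₁) B0
      linarith only [u1, u2, u3, u4]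
    -- numeric estimates on the decay rates
    set X : ℝ := Λ ^ n with hX_def
    have hX0 : 0 ≤ X := pow_nonneg hΛpos.le n
    have hEM : l ^ m ≤ X := by
      have e2 : l ^ ((m:ℕ):ℝ) ≤ l ^ (β * n) :=
        Real.rpow_le_rpow_of_exponent_ge hl0 hl1.le hm1
      have e3 : l ^ (β * (n:ℝ)) = (l ^ (β:ℝ)) ^ n := by
        rw [Real.rpow_mul hl0.le, Real.rpow_natCast]
      have e4 : (l ^ (β:ℝ)) ^ n ≤ X := by
        rw [hX_def]
        exact pow_le_pow_left₀ (Real.rpow_nonneg hl0.le β)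
          (le_trans (le_max_left _ _) (le_max_left _ _)) n
      calc (l:ℝ) ^ m = l ^ ((m:ℕ):ℝ) := (Real.rpow_natCast l m).symm
        _ ≤ l ^ (β * (n:ℝ)) := e2
        _ = (l ^ (β:ℝ)) ^ n := e3
        _ ≤ X := e4
    have hEJ : l ^ (m+1) ≤ X := by
      have e : (l:ℝ) ^ (m+1) = l ^ m * l := pow_succ l m
      nlinarith only [pow_nonneg hl0.le m, hEM, e, hl0, hl1]
    have hER : Λ₀ ^ (m+1) ≤ X := by
      have e0 : (Λ₀:ℝ) ^ (m+1) ≤ Λ₀ ^ m := by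
        have e : (Λ₀:ℝ) ^ (m+1) = Λ₀ ^ m * Λ₀ := pow_succ Λ₀ m
        nlinarith only [pow_nonneg hΛ₀0.le m, e, hΛ₀0, hΛ₀1]
      have e2 : Λ₀ ^ ((m:ℕ):ℝ) ≤ Λ₀ ^ (β * n) :=
        Real.rpow_le_rpow_of_exponent_ge hΛ₀0 hΛ₀1.le hm1
      have e3 : Λ₀ ^ (β * (n:ℝ)) = (Λ₀ ^ (β:ℝ)) ^ n := by
        rw [Real.rpow_mul hΛ₀0.le, Real.rpow_natCast]
      have e4 : (Λ₀ ^ (β:ℝ)) ^ n ≤ X := by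
        rw [hX_def]
        exact pow_le_pow_left₀ (Real.rpow_nonneg hΛ₀0.le β)
          (le_trans (le_max_right _ _) (le_max_left _ _)) n
      calc (Λ₀:ℝ) ^ (m+1) ≤ Λ₀ ^ m := e0
        _ = Λ₀ ^ ((m:ℕ):ℝ) := (Real.rpow_natCast Λ₀ m).symm
        _ ≤ Λ₀ ^ (β * (n:ℝ)) := e2
        _ = (Λ₀ ^ (β:ℝ)) ^ n := e3
        _ ≤ X := e4
    have hEN : Λ₀ ^ N * K ^ q ≤ K' ^ 4 * X := by
      have k1 : K ^ q ≤ K' ^ q := pow_le_pow_left₀ hK.le (le_max_left _ _) q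
      have k3 : K' ^ ((q:ℕ):ℝ) ≤ K' ^ (2*β*n + 4 : ℝ) := by
        apply Real.rpow_le_rpow_of_exponent_le hK'1
        have e : ((q:ℕ):ℝ) = 2 * (m:ℝ) + 2 := by
          rw [hq_def]; push_cast; ring
        rw [e]
        linarith only [hm2]
      have k4 : K' ^ (2*β*n + 4 : ℝ) = (K' ^ (2*β:ℝ)) ^ n * K' ^ 4 := by
        rw [Real.rpow_add hK'0]
        congr 1
        · rw [show (2*β*(n:ℝ) : ℝ) = (2*β) * (n:ℝ) by ring, Real.rpow_mul (by linarith),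
            Real.rpow_natCast]
        · rw [show ((4:ℝ)) = ((4:ℕ):ℝ) by norm_num, Real.rpow_natCast]
      have k5 : (K' ^ (2*β:ℝ)) ^ n ≤ (Λ₀ ^ (-(1/2):ℝ)) ^ n :=
        pow_le_pow_left₀ (Real.rpow_nonneg hK'0.le _) hKey n
      have l1 : (Λ₀:ℝ) ^ N = Λ₀ ^ n * Λ₀ ^ (m + 2) := by
        have e : N = n + (m+2) := by rw [hN_def]; omega
        rw [e, pow_add]
      have l2 : (Λ₀:ℝ) ^ (m+2) ≤ 1 := pow_le_one₀ hΛ₀0.le hΛ₀1.le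
      have base : Λ₀ * Λ₀ ^ (-(1/2):ℝ) = Λ₀ ^ ((1/2):ℝ) := by
        nth_rewrite 1 [show (Λ₀:ℝ) = Λ₀ ^ (1:ℝ) from (Real.rpow_one Λ₀).symm]
        rw [← Real.rpow_add hΛ₀0]
        norm_num
      have key : Λ₀ ^ n * (Λ₀ ^ (-(1/2):ℝ)) ^ n = (Λ₀ ^ ((1/2):ℝ)) ^ n := by
        rw [← mul_pow, base]
      calc Λ₀ ^ N * K ^ q
          ≤ Λ₀ ^ N * K' ^ q := mul_le_mul_of_nonneg_left k1 (pow_nonneg hΛ₀0.le N)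
        _ = (Λ₀ ^ n * Λ₀ ^ (m+2)) * K' ^ q := by rw [l1]
        _ ≤ (Λ₀ ^ n * 1) * K' ^ q := by
            apply mul_le_mul_of_nonneg_right ?_ (pow_nonneg hK'0.le q)
            exact mul_le_mul_of_nonneg_left l2 (pow_nonneg hΛ₀0.le n)
        _ = Λ₀ ^ n * K' ^ q := by ring
        _ ≤ Λ₀ ^ n * ((K' ^ (2*β:ℝ)) ^ n * K' ^ 4) := by
            apply mul_le_mul_of_nonneg_left ?_ (pow_nonneg hΛ₀0.le n)
            calc (K':ℝ) ^ q = K' ^ ((q:ℕ):ℝ) := (Real.rpow_natCast K' q).symm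
              _ ≤ K' ^ (2*β*n + 4 : ℝ) := k3
              _ = (K' ^ (2*β:ℝ)) ^ n * K' ^ 4 := k4
        _ = (Λ₀ ^ n * (K' ^ (2*β:ℝ)) ^ n) * K' ^ 4 := by ring
        _ ≤ (Λ₀ ^ n * (Λ₀ ^ (-(1/2):ℝ)) ^ n) * K' ^ 4 := by
            apply mul_le_mul_of_nonneg_right ?_ (by positivity)
            exact mul_le_mul_of_nonneg_left k5 (pow_nonneg hΛ₀0.le n)
        _ = (Λ₀ ^ ((1/2):ℝ)) ^ n * K' ^ 4 := by rw [key]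
        _ ≤ X * K' ^ 4 := by
            apply mul_le_mul_of_nonneg_right ?_ (by positivity)
            rw [hX_def]
            exact pow_le_pow_left₀ (Real.rpow_nonneg hΛ₀0.le _) (le_max_right _ _) n
        _ = K' ^ 4 * X := by ring
    -- assemble the real estimate
    have cc1 : Sg ≤ Dg := by rw [hDg_def]; linarith only [hLg0]
    have cc2 : Lg ≤ Dg := by rw [hDg_def]; linarith only [hSg0]
    have cc3 : Sf ≤ Df := by rw [hDf_def]; linarith only [hP'0, hLf0, hV'0]
    have cc4 : Lf ≤ Df := by rw [hDf_def]; linarith only [hP'0, hSf0, hV'0]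
    have hDgDf0 : 0 ≤ Dg * Df := mul_nonneg hDg0 hDf0
    have Q1 : Sg * Lf * l ^ (m+1) ≤ Dg * Df * X := by
      have h' : Sg * Lf ≤ Dg * Df := mul_le_mul cc1 cc4 hLf0 (le_trans hSg0 cc1)
      calc Sg * Lf * l ^ (m+1) = (Sg * Lf) * l ^ (m+1) := by ring
        _ ≤ (Dg * Df) * X := mul_le_mul h' hEJ (pow_nonneg hl0.le _) hDgDf0
        _ = Dg * Df * X := by ring
    have Q2 : Sf * Lg * l ^ m ≤ Dg * Df * X := by
      have h' : Lg * Sf ≤ Dg * Df := mul_le_mul cc2 cc3 hSf0 (le_trans hLg0 cc2)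
      calc Sf * Lg * l ^ m = (Lg * Sf) * l ^ m := by ring
        _ ≤ (Dg * Df) * X := mul_le_mul h' hEM (pow_nonneg hl0.le _) hDgDf0
        _ = Dg * Df * X := by ring
    have Q3 : Sf * Sg * Λ₀ ^ (m+1) ≤ Dg * Df * X := by
      have h' : Sg * Sf ≤ Dg * Df := mul_le_mul cc1 cc3 hSf0 (le_trans hSg0 cc1)
      calc Sf * Sg * Λ₀ ^ (m+1) = (Sg * Sf) * Λ₀ ^ (m+1) := by ring
        _ ≤ (Dg * Df) * X := mul_le_mul h' hER (pow_nonneg hΛ₀0.le _) hDgDf0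
        _ = Dg * Df * X := by ring
    have Q4 : Sg * Df * (Λ₀ ^ N * K ^ q) ≤ Dg * Df * (K' ^ 4 * X) := by
      have h' : Sg * Df ≤ Dg * Df := mul_le_mul_of_nonneg_right cc1 hDf0
      exact mul_le_mul h' hEN
        (mul_nonneg (pow_nonneg hΛ₀0.le N) (pow_nonneg hK.le q)) hDgDf0
    have R3 : C₀ * (Sf * Sg * Λ₀ ^ (m+1)) ≤ C₀ * (Dg * Df * X) :=
      mul_le_mul_of_nonneg_left Q3 hC₀.le
    have R4 : C₀ * C₁ * (Sg * Df * (Λ₀ ^ N * K ^ q)) ≤ C₀ * C₁ * (Dg * Df * (K' ^ 4 * X)) :=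
      mul_le_mul_of_nonneg_left Q4 (mul_nonneg hC₀.le hC₁.le)
    clear_value Sg Lg Sf Lf P' V' Dg Df X l K' Λ C₂
    have nn1 : (0:ℝ) ≤ Sg * Lf * l ^ (m+1) :=
      mul_nonneg (mul_nonneg hSg0 hLf0) (pow_nonneg hl0.le _)
    have nn2 : (0:ℝ) ≤ Sf * Lg * l ^ m :=
      mul_nonneg (mul_nonneg hSf0 hLg0) (pow_nonneg hl0.le _)
    have b1 : |A0 - A1| ≤ Dg * Df * X := le_trans hS1 (by nlinarith only [Q1, Q2, nn1, nn2, mul_nonneg hDgDf0 hX0])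
    have b2 : |A1 - A2| ≤ C₀ * (Dg * Df * X) := le_trans hS2 (by linarith only [R3])
    have b3 : |A2 - A3| ≤ Dg * Df * X := le_trans hS3 (by nlinarith only [Q1, nn1, mul_nonneg hDgDf0 hX0])
    have b4 : |A3 - Ig * If₁| ≤ C₀ * C₁ * (Dg * Df * (K' ^ 4 * X)) :=
      le_trans hS4 (by linarith only [R4])
    have b5 : |Ig * If₁ - B0| ≤ 2 * (Dg * Df * X) + C₀ * (Dg * Df * X) :=
      le_trans hS5 (by nlinarith only [Q1, R3, Q2, nn2, mul_nonneg hDgDf0 hX0])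
    have hreal : |A0 - B0| ≤ C₂ * X * (Dg * Df) := by
      rw [hC₂_def]
      have hslack : 0 ≤ Dg * Df * X := mul_nonneg hDgDf0 hX0
      linarith only [htot, b1, b2, b3, b4, b5, hslack]
    -- conversion to the extended-real statement
    have hyg : yLipNorm g = ENNReal.ofReal Dg := by
      rw [yLipNorm, hDg_def, ENNReal.ofReal_add hSg0 hLg0, hSg_def, hLg_def,
        ENNReal.ofReal_toReal hsgtop, ENNReal.ofReal_toReal hlgtop]
    have hsumf : yLipNorm f + norm1E α (piF f) + VarSq f
        = ENNReal.ofReal ((Sf + Lf) + P' + V') := by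
      rw [hyf, show norm1E α (piF f) = ENNReal.ofReal P' from by
          rw [hP'_def, ENNReal.ofReal_toReal hptop],
        show VarSq f = ENNReal.ofReal V' from by rw [hV'_def, ENNReal.ofReal_toReal hvtop],
        ← ENNReal.ofReal_add (by positivity) hP'0, ← ENNReal.ofReal_add (by positivity) hV'0]
    rw [hyg, hsumf, ← ENNReal.ofReal_mul (mul_nonneg hC₂0.le hX0),
      ← ENNReal.ofReal_mul (mul_nonneg (mul_nonneg hC₂0.le hX0) hDg0)]
    apply ENNReal.ofReal_le_ofReal
    have e : (Sf + Lf) + P' + V' = Df := by rw [hDf_def]; ring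
    rw [e]
    calc |A0 - B0| ≤ C₂ * X * (Dg * Df) := hreal
      _ = C₂ * X * Dg * Df := by ring
  · -- RHS is infinite (or f vanishes)
    by_cases hf0 : yLipNorm f = 0
    · have hsupf : supQ f = 0 := by
        have := hf0; rw [yLipNorm, add_eq_zero] at this; exact this.1
      have hfz : ∀ p ∈ Sq, f p = 0 := fun p hp => supQ_eq_zero hsupf hp
      have hfint : (∫ p, f p ∂μ) = 0 := by
        rw [integral_eq_zero_of_ae]; exact hae.mono fun p hp => hfz p hp
      have hfgint : (∫ p, f p * g (F^[n] p) ∂μ) = 0 := by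
        rw [integral_eq_zero_of_ae]
        refine hae.mono fun p hp => ?_
        show f p * g (F^[n] p) = 0
        rw [hfz p hp, zero_mul]
      rw [hfgint, hfint, mul_zero, sub_zero, abs_zero, ENNReal.ofReal_zero]
      exact zero_le
    · -- RHS = ⊤
      have hC₂Λ : ENNReal.ofReal (C₂ * Λ ^ n) ≠ 0 := by
        simp only [ne_eq, ENNReal.ofReal_eq_zero, not_le]
        positivity
      have hRHS : ENNReal.ofReal (C₂ * Λ ^ n) * yLipNorm g *
          (yLipNorm f + norm1E α (piF f) + VarSq f) = ⊤ := by
        push_neg at hfin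
        by_cases hgtop : yLipNorm g = ⊤
        · rw [hgtop, ENNReal.mul_top hC₂Λ, ENNReal.top_mul]
          intro hsum
          exact hf0 (by simpa using (add_eq_zero.mp ((add_eq_zero.mp hsum).1)).1)
        · have hsum : yLipNorm f + norm1E α (piF f) + VarSq f = ⊤ := by
            rcases eq_or_ne (yLipNorm f) ⊤ with h | h
            · simp [h]
            rcases eq_or_ne (norm1E α (piF f)) ⊤ with h2 | h2
            · simp [h2]
            rcases eq_or_ne (VarSq f) ⊤ with hv | hv
            · simp [hv]
            · exact absurd (hfin h h2 hv) hgtop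
          rw [hsum, ENNReal.mul_top]
          exact fun h => absurd (mul_eq_zero.mp h) (by
            rintro (h' | h')
            · exact hC₂Λ h'
            · exact hg0 h')
      rw [hRHS]
      exact le_top
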